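/- For n ≥ 5, the configuration space of n distinct labeled points on the Riemann sphere modulo Möbius transformations, equivalently the open subset M_{0,n} = {(x_4, …, x_n) ∈ (C \ {0,1})^{n−3} : x_i ≠ x_j for i ≠ j}, is connected and has exactly one end. -/

import Mathlib

open Function Set

namespace Stmt15Aux

/-- The moduli set. -/
def SS (m : ℕ) : Set (Fin m → ℂ) :=
  {x | (∀ i, x i ≠ 0 ∧ x i ≠ 1) ∧ Function.Injective x}

lemma joinedIn_of_map {E : Type*} [TopologicalSpace E] {T : Set E} (f : ℂ → E)
    (hf : Continuous f) {F : Set ℂ} (hF : F.Countable)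
    (hmem : ∀ z ∉ F, f z ∈ T) {a b : ℂ} (ha : a ∉ F) (hb : b ∉ F) :
    JoinedIn T (f a) (f b) := by
  have hpc : IsPathConnected Fᶜ :=
    hF.isPathConnected_compl_of_one_lt_rank
      (by rw [Complex.rank_real_complex]; norm_num)
  obtain ⟨γ, hγ⟩ := hpc.joinedIn a ha b hb
  exact ⟨γ.map hf, fun t => hmem _ (hγ t)⟩

/-- The intermediate point in a coordinatewise path from `x` to `y`. -/
def W {m : ℕ} (x y : Fin m → ℂ) (k : ℕ) : Fin m → ℂ :=
  fun i => if i.val < k then y i else x i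

lemma W_zero {m : ℕ} (x y : Fin m → ℂ) : W x y 0 = x := by
  funext i; simp [W]

lemma W_last {m : ℕ} (x y : Fin m → ℂ) : W x y m = y := by
  funext i; simp [W, i.isLt]

lemma W_succ {m : ℕ} (x y : Fin m → ℂ) {k : ℕ} (hk : k < m) :
    W x y (k+1) = Function.update (W x y k) ⟨k, hk⟩ (y ⟨k, hk⟩) := by
  funext i
  rcases eq_or_ne i ⟨k, hk⟩ with rfl | hne
  · simp [W]
  · have hv : i.val ≠ k := fun h => hne (Fin.ext h)
    rw [Function.update_of_ne hne]
    simp only [W]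
    by_cases h : i.val < k
    · rw [if_pos h, if_pos (by omega)]
    · rw [if_neg h, if_neg (by omega)]

lemma chain {m : ℕ} {T : Set (Fin m → ℂ)} {x y : Fin m → ℂ} (hx : x ∈ T)
    (H : ∀ k : Fin m, x k = y k ∨ ∃ F : Set ℂ, F.Countable ∧ x k ∉ F ∧ y k ∉ F ∧
      ∀ z ∉ F, Function.update (W x y k.val) k z ∈ T) :
    JoinedIn T x y := by
  have main : ∀ k : ℕ, k ≤ m → JoinedIn T x (W x y k) := by
    intro k
    induction k with
    | zero => intro _; rw [W_zero]; exact JoinedIn.refl hx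
    | succ k ih =>
      intro hk1
      have hk : k < m := hk1
      have prev := ih hk.le
      rw [W_succ x y hk]
      have hWk : W x y k ⟨k, hk⟩ = x ⟨k, hk⟩ := by simp [W]
      rcases H ⟨k, hk⟩ with h | ⟨F, hFc, hxF, hyF, hmem⟩
      · have : Function.update (W x y k) ⟨k, hk⟩ (y ⟨k, hk⟩) = W x y k := by
          rw [← h, ← hWk, Function.update_eq_self]
        rw [this]; exact prev
      · refine prev.trans ?_
        have hcont : Continuous fun z => Function.update (W x y k) ⟨k, hk⟩ z := by
          refine continuous_pi fun j => ?_
          rcases eq_or_ne j ⟨k, hk⟩ with rfl | hne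
          · simpa [Function.update_apply] using continuous_id'
          · simpa [Function.update_apply, hne] using continuous_const
        have hj := joinedIn_of_map (T := T)
          (fun z => Function.update (W x y k) ⟨k, hk⟩ z) hcont hFc hmem hxF hyF
        have j1 : Function.update (W x y k) ⟨k, hk⟩ (x ⟨k, hk⟩) = W x y k := by
          rw [← hWk, Function.update_eq_self]
        simpa only [j1] using hj
  have := main m le_rfl
  rwa [W_last] at this


lemma chainS {m : ℕ} {x y : Fin m → ℂ} (hx : x ∈ SS m) (hy : y ∈ SS m)
    (hcross : ∀ i j : Fin m, i ≠ j → y i ≠ x j)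
    (K' : Set (Fin m → ℂ)) (hxK : x ∉ K')
    (hstep : ∀ k : Fin m, x k = y k ∨ ∀ z : ℂ,
      Function.update (W x y k.val) k z ∉ K') :
    JoinedIn (SS m \ K') x y := by
  obtain ⟨hx01, hxinj⟩ := hx
  obtain ⟨hy01, hyinj⟩ := hy
  apply chain (show x ∈ SS m \ K' from ⟨⟨hx01, hxinj⟩, hxK⟩)
  intro k
  rcases hstep k with h | h
  · exact Or.inl h
  refine Or.inr ⟨insert 0 (insert 1 ((W x y k.val) '' {j | j ≠ k})), ?_, ?_, ?_, ?_⟩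
  · exact (Set.Finite.insert 0 (Set.Finite.insert 1 ((Set.toFinite _).image _))).countable
  · -- x k ∉ F
    simp only [Set.mem_insert_iff, Set.mem_image, mem_setOf_eq, not_or]
    refine ⟨(hx01 k).1, (hx01 k).2, ?_⟩
    rintro ⟨j, hjk, hj⟩
    by_cases hjlt : j.val < k.val
    · exact hcross j k hjk (by simpa [W, hjlt] using hj)
    · exact hjk (hxinj (by simpa [W, hjlt] using hj))
  · -- y k ∉ F
    simp only [Set.mem_insert_iff, Set.mem_image, mem_setOf_eq, not_or]
    refine ⟨(hy01 k).1, (hy01 k).2, ?_⟩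
    rintro ⟨j, hjk, hj⟩
    by_cases hjlt : j.val < k.val
    · exact hjk (hyinj (by simpa [W, hjlt] using hj))
    · exact hcross k j (Ne.symm hjk) ((by simpa [W, hjlt] using hj : x j = y k).symm)
  · -- membership
    intro z hz
    simp only [Set.mem_insert_iff, Set.mem_image, mem_setOf_eq, not_or] at hz
    obtain ⟨hz0, hz1, hzim⟩ := hz
    refine ⟨⟨?_, ?_⟩, h z⟩
    · intro i
      rcases eq_or_ne i k with rfl | hik
      · simp [hz0, hz1]
      · rw [Function.update_of_ne hik]
        by_cases hlt : i.val < k.val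
        · simpa [W, hlt] using hy01 i
        · simpa [W, hlt] using hx01 i
    · -- injectivity of the update
      intro a b hab
      by_contra hne
      rcases eq_or_ne a k with rfl | hak
      · have hbk : b ≠ a := Ne.symm hne
        rw [Function.update_self, Function.update_of_ne hbk] at hab
        exact hzim ⟨b, hbk, hab.symm⟩
      · rcases eq_or_ne b k with rfl | hbk
        · rw [Function.update_self, Function.update_of_ne hak] at hab
          exact hzim ⟨a, hak, hab⟩
        · rw [Function.update_of_ne hak, Function.update_of_ne hbk] at hab
          by_cases halt : a.val < k.val <;> by_cases hblt : b.val < k.val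
          · exact hne (hyinj (by simpa [W, halt, hblt] using hab))
          · exact hcross a b hne (by simpa [W, halt, hblt] using hab)
          · exact hcross b a (Ne.symm hne)
              ((by simpa [W, halt, hblt] using hab : x a = y b).symm)
          · exact hne (hxinj (by simpa [W, halt, hblt] using hab))


/-- Basepoint with coordinates `(i+1)*(R+2)`. -/
def bp (m : ℕ) (R : ℝ) : Fin m → ℂ := fun i => (((i.val + 1 : ℕ) * (R + 2) : ℝ) : ℂ)

lemma bp_norm {m : ℕ} {R : ℝ} (hR : 0 ≤ R) (i : Fin m) :
    ‖bp m R i‖ = (i.val + 1 : ℕ) * (R + 2) := by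
  simp only [bp, Complex.norm_real, Real.norm_eq_abs]
  rw [abs_of_nonneg (by positivity)]

lemma bp_norm_ge {m : ℕ} {R : ℝ} (hR : 0 ≤ R) (i : Fin m) : R + 2 ≤ ‖bp m R i‖ := by
  rw [bp_norm hR]
  have : (1 : ℝ) ≤ (i.val + 1 : ℕ) := by exact_mod_cast Nat.succ_le_succ (Nat.zero_le _)
  nlinarith

lemma bp_norm_le {m : ℕ} {R : ℝ} (hR : 0 ≤ R) (i : Fin m) : ‖bp m R i‖ ≤ m * (R + 2) := by
  rw [bp_norm hR]
  have : ((i.val + 1 : ℕ) : ℝ) ≤ (m : ℝ) := by exact_mod_cast i.isLt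
  nlinarith

lemma bp_mem_S {m : ℕ} {R : ℝ} (hR : 0 ≤ R) : bp m R ∈ SS m := by
  refine ⟨fun i => ⟨?_, ?_⟩, ?_⟩
  · intro h
    have := bp_norm_ge hR i
    rw [h, norm_zero] at this; linarith
  · intro h
    have := bp_norm_ge hR i
    rw [h, norm_one] at this; linarith
  · intro i j hij
    simp only [bp] at hij
    have : ((i.val + 1 : ℕ) * (R + 2) : ℝ) = ((j.val + 1 : ℕ) * (R + 2) : ℝ) := by
      exact_mod_cast hij
    have h2 : ((i.val + 1 : ℕ) : ℝ) = ((j.val + 1 : ℕ) : ℝ) :=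
      mul_right_cancel₀ (by linarith) this
    exact Fin.ext (by exact_mod_cast Nat.succ_injective (by exact_mod_cast h2))

lemma caseA {m : ℕ} (hm : 2 ≤ m) {R : ℝ} (hR : 0 ≤ R)
    (K' : Set (Fin m → ℂ)) (hK' : ∀ w ∈ K', ‖w‖ ≤ R)
    {x : Fin m → ℂ} (hx : x ∈ SS m) {i0 : Fin m} (hi0 : R < ‖x i0‖) :
    JoinedIn (SS m \ K') x (bp m R) := by
  have hnt : Nontrivial (Fin m) := Fin.nontrivial_iff_two_le.2 hm
  set L : ℝ := max ‖x‖ (m * (R + 2)) + 1 with hLdef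
  have hLx : ‖x‖ < L := lt_of_le_of_lt (le_max_left _ _) (by linarith [le_max_left ‖x‖ (m * (R+2))] )
  have hLm : m * (R + 2) < L := lt_of_le_of_lt (le_max_right _ _) (lt_add_one _)
  have hLR : R < L := by
    have : (2:ℝ) * (R + 2) ≤ m * (R + 2) := by
      have : (2:ℝ) ≤ m := by exact_mod_cast hm
      nlinarith
    linarith
  have hL1 : 1 < L := by
    have : (2:ℝ) * (R + 2) ≤ m * (R + 2) := by
      have : (2:ℝ) ≤ m := by exact_mod_cast hm
      nlinarith
    linarith
  have hL0 : 0 < L := by linarith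
  -- the fresh tuple
  set z : Fin m → ℂ := fun j => (((j.val + 1 : ℕ) * L : ℝ) : ℂ) with hzdef
  have hznorm : ∀ j, ‖z j‖ = (j.val + 1 : ℕ) * L := by
    intro j
    simp only [hzdef, Complex.norm_real, Real.norm_eq_abs]
    rw [abs_of_nonneg (by positivity)]
  have hzge : ∀ j : Fin m, L ≤ ‖z j‖ := by
    intro j
    rw [hznorm]
    have : (1 : ℝ) ≤ (j.val + 1 : ℕ) := by exact_mod_cast Nat.succ_le_succ (Nat.zero_le _)
    nlinarith
  have hzinj : Function.Injective z := by
    intro i j hij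
    simp only [hzdef] at hij
    have : ((i.val + 1 : ℕ) * L : ℝ) = ((j.val + 1 : ℕ) * L : ℝ) := by exact_mod_cast hij
    have h2 : ((i.val + 1 : ℕ) : ℝ) = ((j.val + 1 : ℕ) : ℝ) :=
      mul_right_cancel₀ (by linarith) this
    exact Fin.ext (by exact_mod_cast Nat.succ_injective (by exact_mod_cast h2))
  have hzS : z ∈ SS m := by
    refine ⟨fun j => ⟨?_, ?_⟩, hzinj⟩
    · intro h; have := hzge j; rw [h, norm_zero] at this; linarith
    · intro h; have := hzge j; rw [h, norm_one] at this; linarith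
  have hzx : ∀ i j : Fin m, z i ≠ x j := by
    intro i j h
    have h1 := hzge i
    have h2 : ‖x j‖ ≤ ‖x‖ := norm_le_pi_norm x j
    rw [h] at h1; linarith
  -- the half-fresh tuple y
  set y : Fin m → ℂ := fun j => if j = i0 then x i0 else z j with hydef
  have hyS : y ∈ SS m := by
    refine ⟨fun j => ?_, ?_⟩
    · by_cases h : j = i0
      · simp only [hydef, if_pos h]; exact hx.1 i0
      · simp only [hydef, if_neg h]; exact hzS.1 j
    · intro a b hab
      by_cases ha : a = i0 <;> by_cases hb : b = i0
      · rw [ha, hb]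
      · rw [hydef] at hab; simp only [ha, if_true, if_neg hb] at hab
        exact absurd hab.symm (hzx b i0)
      · rw [hydef] at hab; simp only [hb, if_true, if_neg ha] at hab
        exact absurd hab (hzx a i0)
      · rw [hydef] at hab; simp only [if_neg ha, if_neg hb] at hab
        exact hzinj hab
  have hxK : x ∉ K' := fun h => absurd (le_trans (norm_le_pi_norm x i0) (hK' x h)) (not_le.2 hi0)
  -- Phase 1 : x to y
  have phase1 : JoinedIn (SS m \ K') x y := by
    refine chainS hx hyS ?_ K' hxK ?_
    · intro i j hij
      by_cases h : i = i0
      · rw [hydef]; simp only [h, if_true]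
        intro he
        exact hij (by rw [h]; exact hx.2 he)
      · rw [hydef]; simp only [if_neg h]
        exact hzx i j
    · intro k
      by_cases hk : k = i0
      · left; rw [hydef]; simp [hk]
      · right
        intro w hw
        have hcoord : Function.update (W x y k.val) k w i0 = x i0 := by
          rw [Function.update_of_ne (Ne.symm hk)]
          by_cases h : (i0 : Fin m).val < k.val
          · simp only [W, h, if_true, hydef, if_pos rfl]
          · simp only [W, h, if_false]
        have : R < ‖Function.update (W x y k.val) k w‖ := by
          calc R < ‖x i0‖ := hi0
          _ = ‖Function.update (W x y k.val) k w i0‖ := by rw [hcoord]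
          _ ≤ _ := norm_le_pi_norm _ i0
        exact absurd (hK' _ hw) (not_le.2 this)
  -- Phase 2 : y to z
  have hyK : y ∉ K' := by
    intro h
    obtain ⟨j, hj⟩ := exists_ne i0
    have : ‖y j‖ ≤ R := le_trans (norm_le_pi_norm y j) (hK' y h)
    rw [hydef] at this; simp only [if_neg hj] at this
    have := hzge j; linarith
  have phase2 : JoinedIn (SS m \ K') y z := by
    refine chainS hyS hzS ?_ K' hyK ?_
    · intro i j hij
      rw [hydef]
      by_cases h : j = i0
      · simp only [h, if_true]; exact hzx i i0
      · simp only [if_neg h]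
        exact fun he => hij (hzinj he)
    · intro k
      by_cases hk : k = i0
      · right
        intro w hw
        obtain ⟨j, hj⟩ := exists_ne i0
        have hcoord : Function.update (W y z k.val) k w j = z j := by
          rw [Function.update_of_ne (by rw [hk]; exact hj)]
          by_cases h : (j : Fin m).val < k.val
          · simp only [W, h, if_true]
          · simp only [W, h, if_false, hydef, if_neg hj]
        have : R < ‖Function.update (W y z k.val) k w‖ := by
          calc R < L := hLR
          _ ≤ ‖z j‖ := hzge j
          _ = ‖Function.update (W y z k.val) k w j‖ := by rw [hcoord]
          _ ≤ _ := norm_le_pi_norm _ j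
        exact absurd (hK' _ hw) (not_le.2 this)
      · left; rw [hydef]; simp [hk]
  -- Phase 3 : z to bp
  have hzK : z ∉ K' := by
    intro h
    have i1 : Fin m := ⟨0, by omega⟩
    have : ‖z i1‖ ≤ R := le_trans (norm_le_pi_norm z i1) (hK' z h)
    have := hzge i1; linarith
  have hbpz : ∀ i j : Fin m, bp m R i ≠ z j := by
    intro i j h
    have h1 := hzge j
    have h2 := bp_norm_le hR i
    rw [h] at h2; linarith
  have phase3 : JoinedIn (SS m \ K') z (bp m R) := by
    refine chainS hzS (bp_mem_S hR) (fun i j _ => hbpz i j) K' hzK ?_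
    intro k
    right
    intro w hw
    obtain ⟨j, hj⟩ := exists_ne k
    have hbig : R < ‖W z (bp m R) k.val j‖ := by
      by_cases h : (j : Fin m).val < k.val
      · simp only [W, h, if_true]
        have := bp_norm_ge hR j; linarith
      · simp only [W, h, if_false]
        have := hzge j; linarith
    have hcoord : Function.update (W z (bp m R) k.val) k w j = W z (bp m R) k.val j :=
      Function.update_of_ne hj _ _
    have : R < ‖Function.update (W z (bp m R) k.val) k w‖ := by
      calc R < ‖W z (bp m R) k.val j‖ := hbig
      _ = ‖Function.update (W z (bp m R) k.val) k w j‖ := by rw [hcoord]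
      _ ≤ _ := norm_le_pi_norm _ j
    exact absurd (hK' _ hw) (not_le.2 this)
  exact (phase1.trans phase2).trans phase3


lemma update_mem_S {m : ℕ} {x : Fin m → ℂ} (hx : x ∈ SS m) {j : Fin m} {b : ℂ}
    (hb0 : b ≠ 0) (hb1 : b ≠ 1) (hbx : ∀ a, a ≠ j → b ≠ x a) :
    Function.update x j b ∈ SS m := by
  refine ⟨fun a => ?_, ?_⟩
  · rcases eq_or_ne a j with rfl | ha
    · rw [Function.update_self]; exact ⟨hb0, hb1⟩
    · rw [Function.update_of_ne ha]; exact hx.1 a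
  · intro a c hac
    by_cases ha : a = j
    · by_cases hc : c = j
      · rw [ha, hc]
      · subst ha
        rw [Function.update_self, Function.update_of_ne hc] at hac
        exact absurd hac (hbx c hc)
    · by_cases hc : c = j
      · subst hc
        rw [Function.update_of_ne ha, Function.update_self] at hac
        exact absurd hac.symm (hbx a ha)
      · rw [Function.update_of_ne ha, Function.update_of_ne hc] at hac
        exact hx.2 hac

lemma isOpen_SS (m : ℕ) : IsOpen (SS m) := by
  have heq : SS m = (⋂ i, {x : Fin m → ℂ | x i ≠ 0}) ∩ (⋂ i, {x : Fin m → ℂ | x i ≠ 1}) ∩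
      ⋂ i, ⋂ j, ⋂ (_ : i ≠ j), {x : Fin m → ℂ | x i ≠ x j} := by
    ext x
    simp only [SS, mem_setOf_eq, Set.mem_inter_iff, Set.mem_iInter]
    constructor
    · rintro ⟨h1, h2⟩
      exact ⟨⟨fun i => (h1 i).1, fun i => (h1 i).2⟩, fun i j hij h => hij (h2 h)⟩
    · rintro ⟨⟨h1, h2⟩, h3⟩
      refine ⟨fun i => ⟨h1 i, h2 i⟩, fun a b hab => ?_⟩
      by_contra hne
      exact h3 a b hne hab
  rw [heq]
  have ho : ∀ (c : ℂ) (i : Fin m), IsOpen {x : Fin m → ℂ | x i ≠ c} := fun c i =>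
    IsOpen.preimage (continuous_apply i) isOpen_ne
  refine IsOpen.inter (IsOpen.inter ?_ ?_) ?_
  · exact isOpen_iInter_of_finite fun i => ho 0 i
  · exact isOpen_iInter_of_finite fun i => ho 1 i
  · refine isOpen_iInter_of_finite fun i => isOpen_iInter_of_finite fun j => ?_
    refine isOpen_iInter_of_finite fun _ => ?_
    have : {x : Fin m → ℂ | x i ≠ x j} = (fun x : Fin m → ℂ => x i - x j) ⁻¹' {0}ᶜ := by
      ext x; simp [sub_eq_zero]
    rw [this]
    exact IsOpen.preimage ((continuous_apply i).sub (continuous_apply j))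
      isOpen_compl_singleton

lemma part1 {m : ℕ} (hm : 2 ≤ m) : IsConnected (SS m) := by
  have hR : (0:ℝ) ≤ 0 := le_refl 0
  have hpc : IsPathConnected (SS m) := by
    refine ⟨bp m 0, bp_mem_S hR, ?_⟩
    intro y hy
    have i0 : Fin m := ⟨0, by omega⟩
    have hi0 : (0:ℝ) < ‖y i0‖ := norm_pos_iff.2 (hy.1 i0).1
    have h := caseA hm hR (∅ : Set (Fin m → ℂ))
      (fun w hw => absurd hw (Set.notMem_empty w)) hy hi0
    rw [Set.diff_empty] at h
    exact h.symm
  exact hpc.isConnected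


set_option maxHeartbeats 1600000 in
lemma part2 {m : ℕ} (hm : 2 ≤ m) {K : Set (Fin m → ℂ)} (hK : IsCompact K)
    (hKS : K ⊆ SS m) :
    ∃ K' : Set (Fin m → ℂ), IsCompact K' ∧ K ⊆ K' ∧ K' ⊆ SS m ∧
      IsConnected (SS m \ K') := by
  have hnt : Nontrivial (Fin m) := Fin.nontrivial_iff_two_le.2 hm
  have i1 : Fin m := ⟨0, by omega⟩
  obtain ⟨R0, hR0⟩ := hK.isBounded.exists_norm_le
  set R : ℝ := max R0 0 with hRdef
  have hR : 0 ≤ R := le_max_right _ _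
  obtain ⟨δ, hδpos, hδ⟩ := hK.exists_thickening_subset_open (isOpen_SS m) hKS
  -- separation of K from the boundary hyperplanes
  have key : ∀ x ∈ K, ∀ (i : Fin m) (b : ℂ),
      Function.update x i b ∉ SS m → δ ≤ ‖x i - b‖ := by
    intro x hx i b hb
    by_contra hlt
    push_neg at hlt
    apply hb
    apply hδ
    rw [Metric.mem_thickening_iff]
    refine ⟨x, hx, ?_⟩
    have hd : dist (Function.update x i b) x ≤ ‖x i - b‖ := by
      rw [dist_pi_le_iff (norm_nonneg _)]
      intro j
      rcases eq_or_ne j i with rfl | hne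
      · rw [Function.update_self, dist_eq_norm, norm_sub_rev]
      · rw [Function.update_of_ne hne, dist_self]; exact norm_nonneg _
    linarith
  have key0 : ∀ x ∈ K, ∀ i, δ ≤ ‖x i‖ := by
    intro x hx i
    have h := key x hx i 0 ?_
    · simpa using h
    · intro h
      exact (h.1 i).1 (by simp)
  have key1 : ∀ x ∈ K, ∀ i, δ ≤ ‖x i - 1‖ := by
    intro x hx i
    refine key x hx i 1 ?_
    intro h
    exact (h.1 i).2 (by simp)
  have key2 : ∀ x ∈ K, ∀ i j : Fin m, j ≠ i → δ ≤ ‖x i - x j‖ := by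
    intro x hx i j hji
    refine key x hx i (x j) ?_
    intro h
    have heq : Function.update x i (x j) i = Function.update x i (x j) j := by
      rw [Function.update_self, Function.update_of_ne hji]
    exact hji (h.2 heq).symm
  -- the filled-in compact set
  set K' : Set (Fin m → ℂ) := {w | ‖w‖ ≤ R ∧ ∀ i, δ ≤ ‖w i‖ ∧ δ ≤ ‖w i - 1‖ ∧
      ∀ j, j ≠ i → δ ≤ ‖w i - w j‖} with hK'def
  have hK'norm : ∀ w ∈ K', ‖w‖ ≤ R := fun w hw => hw.1
  have hKK' : K ⊆ K' := fun x hx => ⟨le_trans (hR0 x hx) (le_max_left _ _),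
    fun i => ⟨key0 x hx i, key1 x hx i, fun j hj => key2 x hx i j hj⟩⟩
  have hK'S : K' ⊆ SS m := by
    rintro w ⟨-, hw⟩
    refine ⟨fun i => ⟨?_, ?_⟩, ?_⟩
    · intro h; have h2 := (hw i).1; rw [h, norm_zero] at h2; linarith
    · intro h; have h2 := (hw i).2.1; rw [h, sub_self, norm_zero] at h2; linarith
    · intro a b hab
      by_contra hne
      have h2 := (hw a).2.2 b (fun h => hne h.symm)
      rw [hab, sub_self, norm_zero] at h2; linarith
  have hK'closed : IsClosed K' := by
    have heq : K' = {w : Fin m → ℂ | ‖w‖ ≤ R} ∩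
        ⋂ i, ({w : Fin m → ℂ | δ ≤ ‖w i‖} ∩ {w : Fin m → ℂ | δ ≤ ‖w i - 1‖} ∩
        ⋂ j, ⋂ (_ : j ≠ i), {w : Fin m → ℂ | δ ≤ ‖w i - w j‖}) := by
      ext w
      simp only [hK'def, mem_setOf_eq, Set.mem_inter_iff, Set.mem_iInter]
      constructor
      · rintro ⟨h1, h2⟩
        exact ⟨h1, fun i => ⟨⟨(h2 i).1, (h2 i).2.1⟩, fun j hj => (h2 i).2.2 j hj⟩⟩
      · rintro ⟨h1, h2⟩
        exact ⟨h1, fun i => ⟨(h2 i).1.1, (h2 i).1.2, fun j hj => (h2 i).2 j hj⟩⟩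
    rw [heq]
    refine IsClosed.inter (isClosed_le continuous_norm continuous_const) ?_
    refine isClosed_iInter fun i => ?_
    refine IsClosed.inter (IsClosed.inter ?_ ?_) ?_
    · exact isClosed_le continuous_const (continuous_apply i).norm
    · exact isClosed_le continuous_const ((continuous_apply i).sub continuous_const).norm
    · exact isClosed_iInter fun j => isClosed_iInter fun _ =>
        isClosed_le continuous_const ((continuous_apply i).sub (continuous_apply j)).norm
  have hK'cpt : IsCompact K' :=
    IsCompact.of_isClosed_subset (isCompact_closedBall (0 : Fin m → ℂ) R) hK'closed
      (fun w hw => mem_closedBall_zero_iff.2 hw.1)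
  -- the basepoint lies outside K'
  have hbpK' : bp m R ∉ K' := by
    intro h
    have h1 : ‖bp m R i1‖ ≤ R := le_trans (norm_le_pi_norm _ i1) h.1
    have h2 := bp_norm_ge hR i1
    linarith
  -- every point of the complement joins to the basepoint
  have main : ∀ y, y ∈ SS m \ K' → JoinedIn (SS m \ K') y (bp m R) := by
    rintro y ⟨hyS, hyK⟩
    by_cases hbig : ∃ i0, R < ‖y i0‖
    · obtain ⟨i0, hi0⟩ := hbig
      exact caseA hm hR K' hK'norm hyS hi0
    · push_neg at hbig
      have hynorm : ‖y‖ ≤ R := (pi_norm_le_iff_of_nonneg hR).2 hbig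
      have hfail : ∃ i, ¬(δ ≤ ‖y i‖ ∧ δ ≤ ‖y i - 1‖ ∧ ∀ j, j ≠ i → δ ≤ ‖y i - y j‖) := by
        by_contra hall
        push_neg at hall
        exact hyK ⟨hynorm, fun i => ⟨(hall i).1, (hall i).2.1, (hall i).2.2⟩⟩
      obtain ⟨i, hi⟩ := hfail
      by_cases hsmall : ‖y i‖ < δ ∨ ‖y i - 1‖ < δ
      · -- case B1 : a coordinate is close to 0 or 1; move another coordinate far out
        obtain ⟨j, hj⟩ := exists_ne i
        set b : ℂ := ((‖y‖ + R + 2 : ℝ) : ℂ) with hbdef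
        have hbnorm : ‖b‖ = ‖y‖ + R + 2 := by
          rw [hbdef, Complex.norm_real, Real.norm_eq_abs, abs_of_nonneg (by positivity)]
        have hbig : ∀ a : Fin m, ‖y a‖ < ‖b‖ := by
          intro a
          have := norm_le_pi_norm y a
          rw [hbnorm]; linarith
        have hb0 : b ≠ 0 := by
          intro h; rw [h, norm_zero] at hbnorm
          have : (0:ℝ) ≤ ‖y‖ := norm_nonneg _
          linarith
        have hb1 : b ≠ 1 := by
          intro h; rw [h, norm_one] at hbnorm
          have : (0:ℝ) ≤ ‖y‖ := norm_nonneg _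
          linarith
        set y' := Function.update y j b with hy'def
        have hy'S : y' ∈ SS m :=
          update_mem_S hyS hb0 hb1 (fun a _ h => absurd (h ▸ hbig a) (lt_irrefl _))
        have step1 : JoinedIn (SS m \ K') y y' := by
          refine chainS hyS hy'S ?_ K' hyK ?_
          · intro a c hac
            rcases eq_or_ne a j with rfl | ha
            · rw [hy'def, Function.update_self]
              intro h
              exact absurd (h ▸ hbig c) (lt_irrefl _)
            · rw [hy'def, Function.update_of_ne ha]
              exact fun h => hac (hyS.2 h)
          · intro k
            rcases eq_or_ne k j with hkj | hk
            · subst hkj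
              right
              intro w hw
              have hik : i ≠ k := Ne.symm hj
              have hcoord : Function.update (W y y' k.val) k w i = y i := by
                rw [Function.update_of_ne hik]
                by_cases h : (i : Fin m).val < k.val
                · simp only [W, h, if_true, hy'def, Function.update_of_ne hik]
                · simp only [W, h, if_false]
              have hcond := (hw.2 i).1
              have hcond2 := (hw.2 i).2.1
              rw [hcoord] at hcond hcond2
              rcases hsmall with hs | hs
              · linarith
              · linarith
            · left
              rw [hy'def, Function.update_of_ne hk]
        have hy'j : R < ‖y' j‖ := by
          rw [hy'def, Function.update_self, hbnorm]
          have : (0:ℝ) ≤ ‖y‖ := norm_nonneg _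
          linarith
        exact step1.trans (caseA hm hR K' hK'norm hy'S hy'j)
      · -- case B2 : two coordinates are close together; translate everything
        push_neg at hsmall
        obtain ⟨hs1, hs2⟩ := hsmall
        push_neg at hi
        obtain ⟨j, hji, hjlt⟩ := hi hs1 hs2
        set f : ℂ → (Fin m → ℂ) := fun t => fun a => y a + t with hfdef
        have hfcont : Continuous f := continuous_pi fun a => (continuous_const.add continuous_id)
        set F : Set ℂ := (Set.range fun a : Fin m => -y a) ∪
          (Set.range fun a : Fin m => 1 - y a) with hFdef
        have hFc : F.Countable := ((Set.finite_range _).union (Set.finite_range _)).countable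
        have hmem : ∀ t ∉ F, f t ∈ SS m \ K' := by
          intro t ht
          simp only [hFdef, Set.mem_union, Set.mem_range, not_or, not_exists] at ht
          refine ⟨⟨fun a => ⟨?_, ?_⟩, ?_⟩, ?_⟩
          · intro h
            exact ht.1 a (by linear_combination -h)
          · intro h
            exact ht.2 a (by linear_combination -h)
          · intro a c h
            have h2 : y a + t = y c + t := by
              have := h
              simp only [hfdef] at this
              exact this
            exact hyS.2 (add_right_cancel h2)
          · intro hk'
            have hc := (hk'.2 i).2.2 j hji
            have heq : f t i - f t j = y i - y j := by
              simp only [hfdef]; ring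
            rw [heq] at hc; linarith
        have h0F : (0:ℂ) ∉ F := by
          simp only [hFdef, Set.mem_union, Set.mem_range, not_or, not_exists]
          constructor
          · intro a h
            exact (hyS.1 a).1 (by linear_combination -h)
          · intro a h
            exact (hyS.1 a).2 (by linear_combination -h)
        set T : ℂ := ((‖y‖ + R + 2 : ℝ) : ℂ) with hTdef
        have hTnorm : ‖T‖ = ‖y‖ + R + 2 := by
          rw [hTdef, Complex.norm_real, Real.norm_eq_abs, abs_of_nonneg (by positivity)]
        have hTF : T ∉ F := by
          simp only [hFdef, Set.mem_union, Set.mem_range, not_or, not_exists]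
          constructor
          · intro a h
            have h1 : ‖T‖ = ‖y a‖ := by rw [← h, norm_neg]
            have h2 := norm_le_pi_norm y a
            rw [hTnorm] at h1; linarith
          · intro a h
            have h1 : ‖(1:ℂ) - y a‖ ≤ 1 + ‖y a‖ := by
              calc ‖(1:ℂ) - y a‖ ≤ ‖(1:ℂ)‖ + ‖y a‖ := norm_sub_le _ _
              _ = 1 + ‖y a‖ := by rw [norm_one]
            have h2 := norm_le_pi_norm y a
            rw [h, hTnorm] at h1
            linarith
        have step1' := joinedIn_of_map f hfcont hFc hmem h0F hTF
        have hf0 : f 0 = y := by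
          funext a; simp only [hfdef]; exact add_zero _
        rw [hf0] at step1'
        have hfT : R < ‖f T i1‖ := by
          have h1 : ‖T‖ - ‖y i1‖ ≤ ‖y i1 + T‖ := by
            have h2 := norm_sub_le (y i1 + T) (y i1)
            rw [add_sub_cancel_left] at h2
            linarith
          have h3 := norm_le_pi_norm y i1
          have hfi : f T i1 = y i1 + T := by simp only [hfdef]
          rw [hfi]
          linarith
        exact step1'.trans (caseA hm hR K' hK'norm (hmem T hTF).1 hfT)
  have hpc : IsPathConnected (SS m \ K') := by
    refine ⟨bp m R, ⟨bp_mem_S hR, hbpK'⟩, ?_⟩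
    intro y hy
    exact (main y hy).symm
  exact ⟨K', hK'cpt, hKK', hK'S, hpc.isConnected⟩

end Stmt15Aux


/-- For n ≥ 5, the moduli space M_{0,n}, realized as the space of (n−3)-tuples
of distinct points in ℂ \ {0,1}, is connected and has exactly one end. -/
theorem stmt_15 (n : ℕ) (hn : 5 ≤ n) :
    IsConnected {x : Fin (n - 3) → ℂ |
      (∀ i, x i ≠ 0 ∧ x i ≠ 1) ∧ Function.Injective x} ∧
    ∀ K : Set (Fin (n - 3) → ℂ), IsCompact K →
      K ⊆ {x | (∀ i, x i ≠ 0 ∧ x i ≠ 1) ∧ Function.Injective x} →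
      ∃ K' : Set (Fin (n - 3) → ℂ), IsCompact K' ∧ K ⊆ K' ∧
        K' ⊆ {x | (∀ i, x i ≠ 0 ∧ x i ≠ 1) ∧ Function.Injective x} ∧
        IsConnected ({x : Fin (n - 3) → ℂ |
          (∀ i, x i ≠ 0 ∧ x i ≠ 1) ∧ Function.Injective x} \ K') := by
  have hm : 2 ≤ n - 3 := by omega
  exact ⟨Stmt15Aux.part1 hm, fun K hK hKS => Stmt15Aux.part2 hm hK hKS⟩
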